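/- Assume λ > 0, μ satisfies (aa), and let γ ∈ (0, 1/2) be such that c₁ := sin(πγ) · ∫_γ^{1−γ} μ(α) dα > 0. Then for every r > 0, G(r) ≤ c₁^{−1} · max{ r^{γ−1}, r^{−γ} }. -/
import Mathlib


open MeasureTheory Set Real

/-- The function `G(r)` from formula (g1). -/
noncomputable def Gfun (μ : ℝ → ℝ) (lam : ℝ) (r : ℝ) : ℝ :=
  (∫ α in Ioo (0:ℝ) 1, r ^ α * Real.sin (π * α) * μ α) /
    ((lam + ∫ α in Ioo (0:ℝ) 1, r ^ α * Real.cos (π * α) * μ α) ^ 2 +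
      (∫ α in Ioo (0:ℝ) 1, r ^ α * Real.sin (π * α) * μ α) ^ 2)

lemma sin_ge_aux {γ α : ℝ} (hγ0 : 0 < γ) (hγ2 : γ < 1/2) (hα : α ∈ Ioo γ (1 - γ)) :
    Real.sin (π * γ) ≤ Real.sin (π * α) := by
  have hπ := Real.pi_pos
  have mono := Real.strictMonoOn_sin.monotoneOn
  rcases le_total α (1/2) with h | h
  · apply mono ?_ ?_ (by nlinarith [hα.1])
    · constructor <;> nlinarith
    · constructor <;> nlinarith [hα.1]
  · have : Real.sin (π * α) = Real.sin (π * (1 - α)) := by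
      rw [mul_sub, mul_one, Real.sin_pi_sub]
    rw [this]
    apply mono ?_ ?_ (by nlinarith [hα.2])
    · constructor <;> nlinarith
    · constructor <;> nlinarith [hα.2]

set_option maxHeartbeats 1000000 in
/-- estimate (g4): if `γ ∈ (0,1/2)` and
`c₁ = sin(πγ) ∫_γ^{1-γ} μ > 0`, then `G(r) ≤ c₁⁻¹ max{r^{γ-1}, r^{-γ}}` for all `r > 0`. -/
theorem G_upper_bound (μ : ℝ → ℝ) (lam : ℝ) (hlam : 0 < lam)
    (hmeas : Measurable μ)
    (hnn : ∀ α ∈ Icc (0:ℝ) 1, 0 ≤ μ α)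
    (hint : IntegrableOn μ (Ioo 0 1))
    (hpos : 0 < ∫ α in Ioo (0:ℝ) 1, μ α)
    (γ : ℝ) (hγ : γ ∈ Ioo (0:ℝ) (1/2))
    (c₁ : ℝ) (hc₁ : c₁ = Real.sin (π * γ) * ∫ α in Ioo γ (1 - γ), μ α)
    (hc₁pos : 0 < c₁) :
    ∀ r > 0, Gfun μ lam r ≤ c₁⁻¹ * max (r ^ (γ - 1)) (r ^ (-γ)) := by
  intro r hr
  obtain ⟨hγ0, hγ2⟩ := hγ
  have hπ := Real.pi_pos
  rw [Gfun]
  set S := ∫ α in Ioo (0:ℝ) 1, r ^ α * Real.sin (π * α) * μ α with hS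
  set C := ∫ α in Ioo (0:ℝ) 1, r ^ α * Real.cos (π * α) * μ α with hC
  set m := min (r ^ γ) (r ^ (1 - γ)) with hm
  clear_value S C m
  have hmpos : 0 < m := by
    rw [hm]; exact lt_min (Real.rpow_pos_of_pos hr _) (Real.rpow_pos_of_pos hr _)
  -- pointwise lower bound r^α ≥ m on Ioo γ (1-γ)
  have hrm : ∀ α ∈ Ioo γ (1 - γ), m ≤ r ^ α := by
    intro α hα
    rw [hm]
    rcases le_total 1 r with h1 | h1
    · exact le_trans (min_le_left _ _)
        (Real.rpow_le_rpow_of_exponent_le h1 hα.1.le)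
    · exact le_trans (min_le_right _ _)
        (Real.rpow_le_rpow_of_exponent_ge hr h1 hα.2.le)
  -- measurability
  have hfmeas : Measurable (fun α => r ^ α * Real.sin (π * α) * μ α) :=
    (((continuous_const.rpow continuous_id (fun _ => Or.inl hr.ne')).measurable).mul
      (Real.measurable_sin.comp (measurable_const.mul measurable_id))).mul hmeas
  -- nonnegativity on Ioo 0 1
  have hfnn : ∀ α ∈ Ioo (0:ℝ) 1, 0 ≤ r ^ α * Real.sin (π * α) * μ α := by
    intro α hα
    have h1 : 0 ≤ r ^ α := (Real.rpow_pos_of_pos hr _).le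
    have h2 : 0 ≤ Real.sin (π * α) := by
      apply Real.sin_nonneg_of_nonneg_of_le_pi <;> nlinarith [hα.1, hα.2]
    exact mul_nonneg (mul_nonneg h1 h2) (hnn α ⟨hα.1.le, hα.2.le⟩)
  -- integrability on Ioo 0 1
  have hfint : IntegrableOn (fun α => r ^ α * Real.sin (π * α) * μ α) (Ioo 0 1) := by
    apply Integrable.mono' (hint.const_mul (max r 1))
      (hfmeas.aestronglyMeasurable)
    filter_upwards [ae_restrict_mem measurableSet_Ioo] with α hα
    have h1 : 0 ≤ r ^ α := (Real.rpow_pos_of_pos hr _).le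
    have hra : r ^ α ≤ max r 1 := by
      rcases le_total 1 r with h | h
      · calc r ^ α ≤ r ^ (1:ℝ) := Real.rpow_le_rpow_of_exponent_le h hα.2.le
          _ = r := Real.rpow_one r
          _ ≤ max r 1 := le_max_left _ _
      · calc r ^ α ≤ r ^ (0:ℝ) := Real.rpow_le_rpow_of_exponent_ge hr h hα.1.le
          _ = 1 := Real.rpow_zero r
          _ ≤ max r 1 := le_max_right _ _
    rw [Real.norm_eq_abs, abs_of_nonneg (hfnn α hα)]
    have h2 : Real.sin (π * α) ≤ 1 := Real.sin_le_one _
    have h2' : 0 ≤ Real.sin (π * α) := by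
      apply Real.sin_nonneg_of_nonneg_of_le_pi <;> nlinarith [hα.1, hα.2]
    have hμ : 0 ≤ μ α := hnn α ⟨hα.1.le, hα.2.le⟩
    calc r ^ α * Real.sin (π * α) * μ α ≤ max r 1 * 1 * μ α := by
          apply mul_le_mul (mul_le_mul hra h2 h2' (le_trans h1 hra)) le_rfl hμ
          positivity
      _ = max r 1 * μ α := by ring
  have hsub : Ioo γ (1 - γ) ⊆ Ioo (0:ℝ) 1 := by
    intro x hx; constructor <;> [linarith [hx.1]; linarith [hx.2]]
  have hsinpos : 0 < Real.sin (π * γ) :=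
    Real.sin_pos_of_pos_of_lt_pi (by positivity) (by nlinarith)
  have hstep1 : c₁ * m ≤ ∫ α in Ioo γ (1 - γ), r ^ α * Real.sin (π * α) * μ α := by
    have h0 : c₁ * m = ∫ α in Ioo γ (1 - γ), m * Real.sin (π * γ) * μ α := by
      have := integral_const_mul (m * Real.sin (π * γ)) μ
        (μ := volume.restrict (Ioo γ (1 - γ)))
      simp only [mul_assoc] at this ⊢
      rw [this, hc₁]; ring
    rw [h0]
    apply setIntegral_mono_on
    · exact ((hint.mono_set hsub).const_mul _)
    · exact hfint.mono_set hsub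
    · exact measurableSet_Ioo
    · intro α hα
      have hμ : 0 ≤ μ α := hnn α ⟨by linarith [hα.1], by linarith [hα.2]⟩
      have h2' : 0 ≤ Real.sin (π * α) := by
        have := hsub hα
        apply Real.sin_nonneg_of_nonneg_of_le_pi <;> nlinarith [this.1, this.2]
      apply mul_le_mul _ le_rfl hμ
        (mul_nonneg (Real.rpow_pos_of_pos hr _).le h2')
      exact mul_le_mul (hrm α hα) (sin_ge_aux hγ0 hγ2 hα) hsinpos.le
        (Real.rpow_pos_of_pos hr _).le
  have hstep2 : (∫ α in Ioo γ (1 - γ), r ^ α * Real.sin (π * α) * μ α) ≤ S := by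
    rw [hS]
    apply setIntegral_mono_set hfint
    · filter_upwards [ae_restrict_mem measurableSet_Ioo] with α hα using hfnn α hα
    · exact HasSubset.Subset.eventuallyLE hsub
  have hSlb : c₁ * m ≤ S := le_trans hstep1 hstep2
  have hSpos : 0 < S := lt_of_lt_of_le (by positivity) hSlb
  have hD : 0 < (lam + C) ^ 2 + S ^ 2 := by positivity
  have hG1 : S / ((lam + C) ^ 2 + S ^ 2) ≤ 1 / S := by
    rw [div_le_div_iff₀ hD hSpos]
    nlinarith [sq_nonneg (lam + C)]
  have hG2 : 1 / S ≤ 1 / (c₁ * m) :=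
    one_div_le_one_div_of_le (by positivity) hSlb
  have hmax : m⁻¹ = max (r ^ (γ - 1)) (r ^ (-γ)) := by
    have e1 : r ^ (-γ) = (r ^ γ)⁻¹ := Real.rpow_neg hr.le γ
    have e2 : r ^ (γ - 1) = (r ^ (1 - γ))⁻¹ := by
      rw [show γ - 1 = -(1 - γ) by ring, Real.rpow_neg hr.le]
    rcases le_total (r ^ γ) (r ^ (1 - γ)) with h | h
    · rw [hm, min_eq_left h, e1, e2, max_eq_right]
      exact inv_anti₀ (Real.rpow_pos_of_pos hr _) h
    · rw [hm, min_eq_right h, e1, e2, max_eq_left]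
      exact inv_anti₀ (Real.rpow_pos_of_pos hr _) h
  calc S / ((lam + C) ^ 2 + S ^ 2) ≤ 1 / (c₁ * m) := le_trans hG1 hG2
    _ = c₁⁻¹ * m⁻¹ := by rw [one_div, mul_inv]
    _ = c₁⁻¹ * max (r ^ (γ - 1)) (r ^ (-γ)) := by rw [hmax]
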